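/- Let k be a field of characteristic zero. If π ∈ k[T] is an irreducible polynomial dividing f_n = f^n - g^n for some n ≥ 1, then for every m ≥ 1 one has ord_π(f^{mn} - g^{mn}) = ord_π(f^n - g^n). -/

import Mathlib

/-- Lemma 1.1 (characteristic zero): if `π` is an irreducible dividing
`f^n - g^n`, then `ord_π (f^(m*n) - g^(m*n)) = ord_π (f^n - g^n)`. -/
theorem stmt_1 {k : Type*} [Field k] [CharZero k]
    (f g : Polynomial k) (hf : f ≠ 0) (hg : g ≠ 0) (hfg : IsCoprime f g)
    (π : Polynomial k) (hπ : Irreducible π)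
    (n : ℕ) (hn : 1 ≤ n) (hdvd : π ∣ f ^ n - g ^ n) :
    ∀ m : ℕ, 1 ≤ m →
      multiplicity π (f ^ (m * n) - g ^ (m * n)) = multiplicity π (f ^ n - g ^ n) := by
  intro m hm
  have hprime : Prime π := hπ.prime
  -- π does not divide g
  have hπg : ¬ π ∣ g := by
    intro h
    have h1 : π ∣ g ^ n := h.trans (dvd_pow_self g (by omega))
    have h2 : π ∣ f ^ n := by
      have := dvd_add hdvd h1
      rwa [sub_add_cancel] at this
    exact hπ.not_isUnit (hfg.isUnit_of_dvd' (hprime.dvd_of_dvd_pow h2) h)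
  set A := f ^ n with hA
  set B := g ^ n with hB
  set S := ∑ i ∈ Finset.range m, A ^ i * B ^ (m - 1 - i) with hS
  -- π does not divide S
  have hπS : ¬ π ∣ S := by
    intro h
    have hterm : π ∣ S - (m : Polynomial k) * B ^ (m - 1) := by
      have heq : ∑ i ∈ Finset.range m, (A ^ i - B ^ i) * B ^ (m - 1 - i)
          = S - (m : Polynomial k) * B ^ (m - 1) := by
        simp only [sub_mul, Finset.sum_sub_distrib]
        congr 1
        rw [Finset.sum_congr rfl (fun i hi => by
          rw [← pow_add]
          congr 1
          have := Finset.mem_range.mp hi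
          omega : ∀ i ∈ Finset.range m, B ^ i * B ^ (m - 1 - i) = B ^ (m - 1))]
        rw [Finset.sum_const, Finset.card_range, nsmul_eq_mul]
      rw [← heq]
      exact Finset.dvd_sum fun i _ =>
        dvd_mul_of_dvd_left (hdvd.trans (sub_dvd_pow_sub_pow A B i)) _
    have h3 : π ∣ (m : Polynomial k) * B ^ (m - 1) := by
      have := dvd_sub h hterm
      rwa [sub_sub_cancel] at this
    have hmunit : IsUnit (m : Polynomial k) := by
      rw [← Polynomial.C_eq_natCast]
      exact Polynomial.isUnit_C.mpr (IsUnit.mk0 _ (by exact_mod_cast Nat.cast_ne_zero.mpr (by omega)))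
    have h4 : π ∣ B ^ (m - 1) := hmunit.dvd_mul_left.mp h3
    exact hπg (hprime.dvd_of_dvd_pow (hprime.dvd_of_dvd_pow h4))
  by_cases h0 : f ^ n = g ^ n
  · have h0' : f ^ (m * n) = g ^ (m * n) := by
      rw [mul_comm, pow_mul, pow_mul, h0]
    rw [h0', hA, hB, h0]; simp
  · have hAB : A - B ≠ 0 := sub_ne_zero.mpr h0
    have hSne : S ≠ 0 := fun h => hπS (h ▸ dvd_zero π)
    have key : f ^ (m * n) - g ^ (m * n) = S * (A - B) := by
      rw [hS, geom_sum₂_mul, hA, hB, mul_comm m n, pow_mul, pow_mul]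
    rw [key, multiplicity_mul hprime
      (FiniteMultiplicity.of_prime_left hprime (mul_ne_zero hSne hAB)),
      multiplicity_eq_zero.mpr hπS, zero_add]
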